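/- Critical-pair preservation under LRU: if binary vectors y and z form a critical pair (y = 1ν1ι0σ and z = 1ν0ι1σ with σ all-zeros), then for every access depth d, the states y' and z' obtained by applying the LRU transition (rotate the prefix of length d, then on a miss evict the deepest buffered item) satisfy y' = z' or y' <_c z'. -/

import Mathlib

/-- `R_d(x)`: unit right cyclic shift of the prefix of length `d` of the state `x`
(the state is a binary vector over LRU stack positions `1,…,V`). -/
def rotd (d : ℕ) (x : ℕ → Bool) : ℕ → Bool :=
  fun j => if j = 1 then x d else if j ≤ d then x (j - 1) else x j

/-- One LRU transition on access depth `d`: rotate the prefix of length `d`; on a hit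
(`x d = true`) nothing else happens; on a miss the accessed item enters position 1
and the deepest buffered item is evicted. -/
def lruStep (V d : ℕ) (x : ℕ → Bool) : ℕ → Bool :=
  let y := rotd d x
  if x d then y
  else fun j =>
    if j = 1 then true
    else if j = (WithBot.unbotD 0 ((Finset.Icc 2 V).filter fun i => y i = true).max) then false
    else y j

/-- `y <_c z`: `y = 1ν1ι0σ` and `z = 1ν0ι1σ` with `σ` all-zeros, i.e. `y` and `z`
agree except at two positions `p < q` where `y p = 1, y q = 0, z p = 0, z q = 1`,
and everything strictly below `q` is `0`. -/
def CritPair (V : ℕ) (y z : ℕ → Bool) : Prop :=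
  ∃ p q, 2 ≤ p ∧ p < q ∧ q ≤ V ∧
    y 1 = true ∧ z 1 = true ∧
    y p = true ∧ y q = false ∧ z p = false ∧ z q = true ∧
    (∀ r, r ≠ p → r ≠ q → y r = z r) ∧
    (∀ r, q < r → y r = false)

lemma rotd_one (d : ℕ) (x : ℕ → Bool) : rotd d x 1 = x d := by simp [rotd]

lemma rotd_zero (d : ℕ) (x : ℕ → Bool) : rotd d x 0 = x 0 := by simp [rotd]

lemma rotd_mid (d : ℕ) (x : ℕ → Bool) {j : ℕ} (h1 : 2 ≤ j) (h2 : j ≤ d) :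
    rotd d x j = x (j - 1) := by
  unfold rotd; rw [if_neg (by omega), if_pos h2]

lemma rotd_gt (d : ℕ) (x : ℕ → Bool) {j : ℕ} (hd : 1 ≤ d) (h : d < j) :
    rotd d x j = x j := by
  unfold rotd; rw [if_neg (by omega), if_neg (by omega)]

lemma max_spec (V m : ℕ) (x : ℕ → Bool) (h2 : 2 ≤ m) (hV : m ≤ V) (hm : x m = true)
    (hr : ∀ r, m < r → x r = false) :
    (WithBot.unbotD 0 ((Finset.Icc 2 V).filter fun i => x i = true).max) = m := by
  have hmem : m ∈ (Finset.Icc 2 V).filter (fun i => x i = true) := by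
    simp [Finset.mem_filter, Finset.mem_Icc, h2, hV, hm]
  have h1 : ((Finset.Icc 2 V).filter fun i => x i = true).max = (m : WithBot ℕ) := by
    apply le_antisymm
    · apply Finset.max_le
      intro b hb
      simp only [Finset.mem_filter, Finset.mem_Icc] at hb
      have : b ≤ m := by
        by_contra hlt
        have := hr b (by omega)
        rw [this] at hb
        exact absurd hb.2 (by simp)
      exact WithBot.coe_le_coe.mpr this
    · exact Finset.le_max hmem
  rw [h1]; rfl

lemma step_hit (V d : ℕ) (x : ℕ → Bool) (h : x d = true) (j : ℕ) :
    lruStep V d x j = rotd d x j := by simp [lruStep, h]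

lemma step_miss (V d M : ℕ) (x : ℕ → Bool) (h : x d = false) (h2 : 2 ≤ M) (hV : M ≤ V)
    (hM : rotd d x M = true) (hr : ∀ r, M < r → rotd d x r = false) (j : ℕ) :
    lruStep V d x j = if j = 1 then true else if j = M then false else rotd d x j := by
  simp only [lruStep, h, if_false, Bool.false_eq_true,
    max_spec V M (rotd d x) h2 hV hM hr]

/-- Critical-pair preservation under LRU: if `y <_c z`, then for every access depth
`d` the LRU successors satisfy `y' = z'` or `y' <_c z'`. -/
theorem stmt13 (V : ℕ) (y z : ℕ → Bool) (h : CritPair V y z)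
    (d : ℕ) (hd1 : 1 ≤ d) (hdV : d ≤ V) :
    lruStep V d y = lruStep V d z ∨ CritPair V (lruStep V d y) (lruStep V d z) := by
  obtain ⟨p, q, hp2, hpq, hqV, hy1, hz1, hyp, hyq, hzp, hzq, hag, htl⟩ := h
  -- the deepest buffered position of y
  have hpmem : p ∈ (Finset.Icc 2 V).filter (fun i => y i = true) := by
    simp only [Finset.mem_filter, Finset.mem_Icc]
    exact ⟨⟨hp2, by omega⟩, hyp⟩
  have hne : ((Finset.Icc 2 V).filter (fun i => y i = true)).Nonempty := ⟨p, hpmem⟩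
  set m := ((Finset.Icc 2 V).filter (fun i => y i = true)).max' hne with hmdef
  have hmmem := ((Finset.Icc 2 V).filter (fun i => y i = true)).max'_mem hne
  rw [Finset.mem_filter, Finset.mem_Icc] at hmmem
  have hym : y m = true := hmmem.2
  have hm2 : 2 ≤ m := hmmem.1.1
  have hmV : m ≤ V := hmmem.1.2
  have hpm : p ≤ m := Finset.le_max' _ p hpmem
  have hmax : ∀ r, m < r → y r = false := by
    intro r hr
    by_cases hyr : y r = true
    · by_cases hrV : r ≤ V
      · have : r ∈ (Finset.Icc 2 V).filter (fun i => y i = true) := by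
          simp only [Finset.mem_filter, Finset.mem_Icc]
          exact ⟨⟨by omega, hrV⟩, hyr⟩
        have := Finset.le_max' _ r this
        omega
      · exact htl r (by omega)
    · simpa using hyr
  have hmq : m < q := by
    have h1 : m ≠ q := by intro h; rw [h, hyq] at hym; cases hym
    by_contra h
    have := htl m (by omega)
    rw [this] at hym; cases hym
  have hztl : ∀ r, q < r → z r = false := by
    intro r hr
    rw [← hag r (by omega) (by omega)]
    exact htl r hr
  rcases Nat.lt_trichotomy d p with hdp | hdp | hdp
  · -- Case d < p
    have hagrot : ∀ r, r ≠ p → r ≠ q → rotd d y r = rotd d z r := by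
      intro r h1 h2
      rcases Nat.lt_or_ge r 2 with hr | hr
      · interval_cases r
        · rw [rotd_zero, rotd_zero]; exact hag 0 (by omega) (by omega)
        · rw [rotd_one, rotd_one]; exact hag d (by omega) (by omega)
      · rcases le_or_gt r d with hrd | hrd
        · rw [rotd_mid d y hr hrd, rotd_mid d z hr hrd]
          exact hag (r-1) (by omega) (by omega)
        · rw [rotd_gt d y hd1 hrd, rotd_gt d z hd1 hrd]; exact hag r h1 h2
    have hyzd : y d = z d := hag d (by omega) (by omega)
    by_cases hyd : y d = true
    · -- hit for both
      have hzd : z d = true := by rw [← hyzd]; exact hyd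
      right
      refine ⟨p, q, hp2, hpq, hqV, ?_, ?_, ?_, ?_, ?_, ?_, ?_, ?_⟩
      · rw [step_hit V d y hyd, rotd_one]; exact hyd
      · rw [step_hit V d z hzd, rotd_one]; exact hzd
      · rw [step_hit V d y hyd, rotd_gt d y hd1 (by omega)]; exact hyp
      · rw [step_hit V d y hyd, rotd_gt d y hd1 (by omega)]; exact hyq
      · rw [step_hit V d z hzd, rotd_gt d z hd1 (by omega)]; exact hzp
      · rw [step_hit V d z hzd, rotd_gt d z hd1 (by omega)]; exact hzq
      · intro r h1 h2
        rw [step_hit V d y hyd, step_hit V d z hzd]; exact hagrot r h1 h2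
      · intro r hr
        rw [step_hit V d y hyd, rotd_gt d y hd1 (by omega)]; exact htl r hr
    · -- miss for both
      simp only [Bool.not_eq_true] at hyd
      have hzd : z d = false := by rw [← hyzd]; exact hyd
      have hMy : rotd d y m = true := by
        rw [rotd_gt d y hd1 (by omega)]; exact hym
      have hMyr : ∀ r, m < r → rotd d y r = false := by
        intro r hr; rw [rotd_gt d y hd1 (by omega)]; exact hmax r hr
      have hMz : rotd d z q = true := by
        rw [rotd_gt d z hd1 (by omega)]; exact hzq
      have hMzr : ∀ r, q < r → rotd d z r = false := by
        intro r hr; rw [rotd_gt d z hd1 (by omega)]; exact hztl r hr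
      have Sy := step_miss V d m y hyd hm2 hmV hMy hMyr
      have Sz := step_miss V d q z hzd (by omega) hqV hMz hMzr
      by_cases hmp : m = p
      · left; funext j
        rw [Sy j, Sz j]
        by_cases hj1 : j = 1
        · rw [if_pos hj1, if_pos hj1]
        rw [if_neg hj1, if_neg hj1]
        by_cases hjm : j = m
        · rw [if_pos hjm, if_neg (by omega : j ≠ q), hjm,
            rotd_gt d z hd1 (by omega), hmp, hzp]
        rw [if_neg hjm]
        by_cases hjq : j = q
        · rw [if_pos hjq, hjq, rotd_gt d y hd1 (by omega), hyq]
        · rw [if_neg hjq]; exact hagrot j (by omega) hjq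
      · right
        refine ⟨p, m, hp2, by omega, hmV, ?_, ?_, ?_, ?_, ?_, ?_, ?_, ?_⟩
        · rw [Sy 1, if_pos rfl]
        · rw [Sz 1, if_pos rfl]
        · rw [Sy p, if_neg (by omega), if_neg (by omega),
            rotd_gt d y hd1 (by omega)]; exact hyp
        · rw [Sy m, if_neg (by omega), if_pos rfl]
        · rw [Sz p, if_neg (by omega), if_neg (by omega),
            rotd_gt d z hd1 (by omega)]; exact hzp
        · rw [Sz m, if_neg (by omega), if_neg (by omega),
            rotd_gt d z hd1 (by omega), ← hag m (by omega) (by omega)]; exact hym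
        · intro r h1 h2
          rw [Sy r, Sz r]
          by_cases hj1 : r = 1
          · rw [if_pos hj1, if_pos hj1]
          rw [if_neg hj1, if_neg hj1, if_neg h2]
          by_cases hjq : r = q
          · rw [if_pos hjq, hjq, rotd_gt d y hd1 (by omega), hyq]
          · rw [if_neg hjq]; exact hagrot r h1 hjq
        · intro r hr
          rw [Sy r, if_neg (by omega), if_neg (by omega)]
          exact hMyr r hr
  · -- Case d = p : left (hit for y, miss for z)
    have hyd : y d = true := by rw [hdp]; exact hyp
    have hzd : z d = false := by rw [hdp]; exact hzp
    have hMz : rotd d z q = true := by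
      rw [rotd_gt d z hd1 (by omega)]; exact hzq
    have hMzr : ∀ r, q < r → rotd d z r = false := by
      intro r hr; rw [rotd_gt d z hd1 (by omega)]; exact hztl r hr
    have Sz := step_miss V d q z hzd (by omega) hqV hMz hMzr
    left; funext j
    rw [step_hit V d y hyd, Sz j]
    by_cases hj1 : j = 1
    · rw [if_pos hj1, hj1, rotd_one, hyd]
    rw [if_neg hj1]
    by_cases hjq : j = q
    · rw [if_pos hjq, hjq, rotd_gt d y hd1 (by omega), hyq]
    rw [if_neg hjq]
    rcases Nat.lt_or_ge j 2 with hr | hr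
    · interval_cases j
      · rw [rotd_zero, rotd_zero]; exact hag 0 (by omega) (by omega)
      · omega
    · rcases le_or_gt j d with hrd | hrd
      · rw [rotd_mid d y hr hrd, rotd_mid d z hr hrd]
        exact hag (j-1) (by omega) (by omega)
      · rw [rotd_gt d y hd1 hrd, rotd_gt d z hd1 hrd]
        exact hag j (by omega) hjq
  rcases Nat.lt_trichotomy d q with hdq | hdq | hdq
  · -- Case p < d < q
    have hagrot : ∀ r, r ≠ p + 1 → r ≠ q → rotd d y r = rotd d z r := by
      intro r h1 h2
      rcases Nat.lt_or_ge r 2 with hr | hr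
      · interval_cases r
        · rw [rotd_zero, rotd_zero]; exact hag 0 (by omega) (by omega)
        · rw [rotd_one, rotd_one]; exact hag d (by omega) (by omega)
      · rcases le_or_gt r d with hrd | hrd
        · rw [rotd_mid d y hr hrd, rotd_mid d z hr hrd]
          exact hag (r-1) (by omega) (by omega)
        · rw [rotd_gt d y hd1 hrd, rotd_gt d z hd1 hrd]
          exact hag r (by omega) h2
    have hyzd : y d = z d := hag d (by omega) (by omega)
    by_cases hyd : y d = true
    · -- hit for both : pair (p+1, q)
      have hzd : z d = true := by rw [← hyzd]; exact hyd
      right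
      refine ⟨p+1, q, by omega, by omega, hqV, ?_, ?_, ?_, ?_, ?_, ?_, ?_, ?_⟩
      · rw [step_hit V d y hyd, rotd_one]; exact hyd
      · rw [step_hit V d z hzd, rotd_one]; exact hzd
      · rw [step_hit V d y hyd, rotd_mid d y (by omega) (by omega)]
        simpa using hyp
      · rw [step_hit V d y hyd, rotd_gt d y hd1 (by omega)]; exact hyq
      · rw [step_hit V d z hzd, rotd_mid d z (by omega) (by omega)]
        simpa using hzp
      · rw [step_hit V d z hzd, rotd_gt d z hd1 (by omega)]; exact hzq
      · intro r h1 h2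
        rw [step_hit V d y hyd, step_hit V d z hzd]; exact hagrot r h1 h2
      · intro r hr
        rw [step_hit V d y hyd, rotd_gt d y hd1 (by omega)]; exact htl r hr
    · -- miss for both
      simp only [Bool.not_eq_true] at hyd
      have hzd : z d = false := by rw [← hyzd]; exact hyd
      have hmd : m ≠ d := by
        intro h; rw [← h] at hyd; rw [hyd] at hym; cases hym
      have hMz : rotd d z q = true := by
        rw [rotd_gt d z hd1 (by omega)]; exact hzq
      have hMzr : ∀ r, q < r → rotd d z r = false := by
        intro r hr; rw [rotd_gt d z hd1 (by omega)]; exact hztl r hr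
      have Sz := step_miss V d q z hzd (by omega) hqV hMz hMzr
      rcases lt_or_gt_of_ne hmd with hmd' | hmd'
      · -- m < d : eviction position for y is m+1
        have hMy : rotd d y (m+1) = true := by
          rw [rotd_mid d y (by omega) (by omega)]; simpa using hym
        have hMyr : ∀ r, m+1 < r → rotd d y r = false := by
          intro r hr
          rcases le_or_gt r d with hrd | hrd
          · rw [rotd_mid d y (by omega) hrd]; exact hmax (r-1) (by omega)
          · rw [rotd_gt d y hd1 hrd]; exact hmax r (by omega)
        have Sy := step_miss V d (m+1) y hyd (by omega) (by omega) hMy hMyr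
        by_cases hmp : m = p
        · left; funext j
          rw [Sy j, Sz j]
          by_cases hj1 : j = 1
          · rw [if_pos hj1, if_pos hj1]
          rw [if_neg hj1, if_neg hj1]
          by_cases hjm : j = m+1
          · rw [if_pos hjm, if_neg (by omega : j ≠ q), hjm,
              rotd_mid d z (by omega) (by omega), hmp]
            simpa using hzp.symm
          rw [if_neg hjm]
          by_cases hjq : j = q
          · rw [if_pos hjq, hjq, rotd_gt d y hd1 (by omega), hyq]
          · rw [if_neg hjq]; exact hagrot j (by omega) hjq
        · right
          refine ⟨p+1, m+1, by omega, by omega, by omega, ?_, ?_, ?_, ?_, ?_, ?_, ?_, ?_⟩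
          · rw [Sy 1, if_pos rfl]
          · rw [Sz 1, if_pos rfl]
          · rw [Sy (p+1), if_neg (by omega), if_neg (by omega),
              rotd_mid d y (by omega) (by omega)]
            simpa using hyp
          · rw [Sy (m+1), if_neg (by omega), if_pos rfl]
          · rw [Sz (p+1), if_neg (by omega), if_neg (by omega),
              rotd_mid d z (by omega) (by omega)]
            simpa using hzp
          · rw [Sz (m+1), if_neg (by omega), if_neg (by omega),
              rotd_mid d z (by omega) (by omega)]
            simp only [Nat.add_sub_cancel]
            rw [← hag m (by omega) (by omega)]; exact hym
          · intro r h1 h2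
            rw [Sy r, Sz r]
            by_cases hj1 : r = 1
            · rw [if_pos hj1, if_pos hj1]
            rw [if_neg hj1, if_neg hj1, if_neg h2]
            by_cases hjq : r = q
            · rw [if_pos hjq, hjq, rotd_gt d y hd1 (by omega), hyq]
            · rw [if_neg hjq]; exact hagrot r h1 hjq
          · intro r hr
            rw [Sy r, if_neg (by omega), if_neg (by omega)]
            exact hMyr r hr
      · -- m > d : eviction position for y is m
        have hMy : rotd d y m = true := by
          rw [rotd_gt d y hd1 (by omega)]; exact hym
        have hMyr : ∀ r, m < r → rotd d y r = false := by
          intro r hr; rw [rotd_gt d y hd1 (by omega)]; exact hmax r hr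
        have Sy := step_miss V d m y hyd hm2 hmV hMy hMyr
        right
        refine ⟨p+1, m, by omega, by omega, hmV, ?_, ?_, ?_, ?_, ?_, ?_, ?_, ?_⟩
        · rw [Sy 1, if_pos rfl]
        · rw [Sz 1, if_pos rfl]
        · rw [Sy (p+1), if_neg (by omega), if_neg (by omega),
            rotd_mid d y (by omega) (by omega)]
          simpa using hyp
        · rw [Sy m, if_neg (by omega), if_pos rfl]
        · rw [Sz (p+1), if_neg (by omega), if_neg (by omega),
            rotd_mid d z (by omega) (by omega)]
          simpa using hzp
        · rw [Sz m, if_neg (by omega), if_neg (by omega),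
            rotd_gt d z hd1 (by omega), ← hag m (by omega) (by omega)]
          exact hym
        · intro r h1 h2
          rw [Sy r, Sz r]
          by_cases hj1 : r = 1
          · rw [if_pos hj1, if_pos hj1]
          rw [if_neg hj1, if_neg hj1, if_neg h2]
          by_cases hjq : r = q
          · rw [if_pos hjq, hjq, rotd_gt d y hd1 (by omega), hyq]
          · rw [if_neg hjq]; exact hagrot r h1 hjq
        · intro r hr
          rw [Sy r, if_neg (by omega), if_neg (by omega)]
          exact hMyr r hr
  · -- Case d = q : miss for y, hit for z
    have hyd : y d = false := by rw [hdq]; exact hyq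
    have hzd : z d = true := by rw [hdq]; exact hzq
    have hMy : rotd d y (m+1) = true := by
      rw [rotd_mid d y (by omega) (by omega)]; simpa using hym
    have hMyr : ∀ r, m+1 < r → rotd d y r = false := by
      intro r hr
      rcases le_or_gt r d with hrd | hrd
      · rw [rotd_mid d y (by omega) hrd]; exact hmax (r-1) (by omega)
      · rw [rotd_gt d y hd1 hrd]; exact htl r (by omega)
    have Sy := step_miss V d (m+1) y hyd (by omega) (by omega) hMy hMyr
    by_cases hmp : m = p
    · left; funext j
      rw [Sy j, step_hit V d z hzd]
      by_cases hj1 : j = 1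
      · rw [if_pos hj1, hj1, rotd_one, hzd]
      rw [if_neg hj1]
      by_cases hjm : j = m+1
      · rw [if_pos hjm, hjm, rotd_mid d z (by omega) (by omega), hmp]
        simpa using hzp.symm
      rw [if_neg hjm]
      rcases Nat.lt_or_ge j 2 with hr | hr
      · interval_cases j
        · rw [rotd_zero, rotd_zero]; exact hag 0 (by omega) (by omega)
        · omega
      · rcases le_or_gt j d with hrd | hrd
        · rw [rotd_mid d y hr hrd, rotd_mid d z hr hrd]
          exact hag (j-1) (by omega) (by omega)
        · rw [rotd_gt d y hd1 hrd, rotd_gt d z hd1 hrd]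
          exact hag j (by omega) (by omega)
    · right
      refine ⟨p+1, m+1, by omega, by omega, by omega, ?_, ?_, ?_, ?_, ?_, ?_, ?_, ?_⟩
      · rw [Sy 1, if_pos rfl]
      · rw [step_hit V d z hzd, rotd_one]; exact hzd
      · rw [Sy (p+1), if_neg (by omega), if_neg (by omega),
          rotd_mid d y (by omega) (by omega)]
        simpa using hyp
      · rw [Sy (m+1), if_neg (by omega), if_pos rfl]
      · rw [step_hit V d z hzd, rotd_mid d z (by omega) (by omega)]
        simpa using hzp
      · rw [step_hit V d z hzd, rotd_mid d z (by omega) (by omega)]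
        simp only [Nat.add_sub_cancel]
        rw [← hag m (by omega) (by omega)]; exact hym
      · intro r h1 h2
        rw [Sy r, step_hit V d z hzd]
        by_cases hj1 : r = 1
        · rw [if_pos hj1, hj1, rotd_one, hzd]
        rw [if_neg hj1, if_neg h2]
        rcases Nat.lt_or_ge r 2 with hr | hr
        · interval_cases r
          · rw [rotd_zero, rotd_zero]; exact hag 0 (by omega) (by omega)
          · omega
        · rcases le_or_gt r d with hrd | hrd
          · rw [rotd_mid d y hr hrd, rotd_mid d z hr hrd]
            exact hag (r-1) (by omega) (by omega)
          · rw [rotd_gt d y hd1 hrd, rotd_gt d z hd1 hrd]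
            exact hag r (by omega) (by omega)
      · intro r hr
        rw [Sy r, if_neg (by omega), if_neg (by omega)]
        exact hMyr r hr
  · -- Case d > q : miss for both
    have hyd : y d = false := htl d (by omega)
    have hzd : z d = false := hztl d (by omega)
    have hMy : rotd d y (m+1) = true := by
      rw [rotd_mid d y (by omega) (by omega)]; simpa using hym
    have hMyr : ∀ r, m+1 < r → rotd d y r = false := by
      intro r hr
      rcases le_or_gt r d with hrd | hrd
      · rw [rotd_mid d y (by omega) hrd]; exact hmax (r-1) (by omega)
      · rw [rotd_gt d y hd1 hrd]; exact hmax r (by omega)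
    have hMz : rotd d z (q+1) = true := by
      rw [rotd_mid d z (by omega) (by omega)]; simpa using hzq
    have hMzr : ∀ r, q+1 < r → rotd d z r = false := by
      intro r hr
      rcases le_or_gt r d with hrd | hrd
      · rw [rotd_mid d z (by omega) hrd]; exact hztl (r-1) (by omega)
      · rw [rotd_gt d z hd1 hrd]; exact hztl r (by omega)
    have Sy := step_miss V d (m+1) y hyd (by omega) (by omega) hMy hMyr
    have Sz := step_miss V d (q+1) z hzd (by omega) (by omega) hMz hMzr
    have hagrot : ∀ r, r ≠ p + 1 → r ≠ q + 1 → rotd d y r = rotd d z r := by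
      intro r h1 h2
      rcases Nat.lt_or_ge r 2 with hr | hr
      · interval_cases r
        · rw [rotd_zero, rotd_zero]; exact hag 0 (by omega) (by omega)
        · rw [rotd_one, rotd_one]; exact hag d (by omega) (by omega)
      · rcases le_or_gt r d with hrd | hrd
        · rw [rotd_mid d y hr hrd, rotd_mid d z hr hrd]
          exact hag (r-1) (by omega) (by omega)
        · rw [rotd_gt d y hd1 hrd, rotd_gt d z hd1 hrd]
          exact hag r (by omega) (by omega)
    by_cases hmp : m = p
    · left; funext j
      rw [Sy j, Sz j]
      by_cases hj1 : j = 1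
      · rw [if_pos hj1, if_pos hj1]
      rw [if_neg hj1, if_neg hj1]
      by_cases hjm : j = m+1
      · rw [if_pos hjm, if_neg (by omega : j ≠ q+1), hjm,
          rotd_mid d z (by omega) (by omega), hmp]
        simpa using hzp.symm
      rw [if_neg hjm]
      by_cases hjq : j = q+1
      · rw [if_pos hjq, hjq, rotd_mid d y (by omega) (by omega)]
        simpa using hyq
      · rw [if_neg hjq]; exact hagrot j (by omega) hjq
    · right
      refine ⟨p+1, m+1, by omega, by omega, by omega, ?_, ?_, ?_, ?_, ?_, ?_, ?_, ?_⟩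
      · rw [Sy 1, if_pos rfl]
      · rw [Sz 1, if_pos rfl]
      · rw [Sy (p+1), if_neg (by omega), if_neg (by omega),
          rotd_mid d y (by omega) (by omega)]
        simpa using hyp
      · rw [Sy (m+1), if_neg (by omega), if_pos rfl]
      · rw [Sz (p+1), if_neg (by omega), if_neg (by omega),
          rotd_mid d z (by omega) (by omega)]
        simpa using hzp
      · rw [Sz (m+1), if_neg (by omega), if_neg (by omega),
          rotd_mid d z (by omega) (by omega)]
        simp only [Nat.add_sub_cancel]
        rw [← hag m (by omega) (by omega)]; exact hym
      · intro r h1 h2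
        rw [Sy r, Sz r]
        by_cases hj1 : r = 1
        · rw [if_pos hj1, if_pos hj1]
        rw [if_neg hj1, if_neg hj1, if_neg h2]
        by_cases hjq : r = q+1
        · rw [if_pos hjq, hjq, rotd_mid d y (by omega) (by omega)]
          simpa using hyq
        · rw [if_neg hjq]; exact hagrot r h1 hjq
      · intro r hr
        rw [Sy r, if_neg (by omega), if_neg (by omega)]
        exact hMyr r hr
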